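/- arXiv:1604.02405 — 2 statements merged into one kernel-verified Lean document; each statement's English description precedes it below -/
import Mathlib

section
/- A coarse space (X, E) has game-theoretic coarse property C if and only if as_C X = 0. In particular, if there exists an entourage L for which X admits no uniformly bounded L-disjoint cover, then Player 2 has no winning strategy in the property-C game. -/
open Set
open scoped ENNReal

universe u v

/-- A coarse structure on a set `X`: a collection of entourages closed under
subsets, finite unions, inverses and compositions, containing the diagonal. -/
structure CoarseStructure (X : Type u) where
  IsEnt : Set (X × X) → Prop
  subset_mem : ∀ {E F : Set (X × X)}, IsEnt F → E ⊆ F → IsEnt E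
  union_mem : ∀ {E F : Set (X × X)}, IsEnt E → IsEnt F → IsEnt (E ∪ F)
  diag_mem : IsEnt {p : X × X | p.1 = p.2}
  inv_mem : ∀ {E : Set (X × X)}, IsEnt E → IsEnt {p : X × X | (p.2, p.1) ∈ E}
  comp_mem : ∀ {E F : Set (X × X)}, IsEnt E → IsEnt F →
    IsEnt {p : X × X | ∃ y, (p.1, y) ∈ E ∧ (y, p.2) ∈ F}

variable {X : Type u} {Y : Type v}

/-- Composition of relations. -/
def rcomp (E F : Set (X × X)) : Set (X × X) :=
  {p : X × X | ∃ y, (p.1, y) ∈ E ∧ (y, p.2) ∈ F}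

/-- Iterated composition `E^k`, with `E^0` the diagonal. -/
def rpow (E : Set (X × X)) : ℕ → Set (X × X)
  | 0 => {p : X × X | p.1 = p.2}
  | k + 1 => rcomp (rpow E k) E

/-- A relation is symmetric if it equals its inverse. -/
def SymmRel (E : Set (X × X)) : Prop := ∀ p : X × X, p ∈ E → (p.2, p.1) ∈ E

/-- `Δ_U = ⋃_{A ∈ U} A × A`. -/
def famDiag (U : Set (Set X)) : Set (X × X) := ⋃ A ∈ U, A ×ˢ A

/-- A family of subsets is uniformly bounded if `⋃ A × A` is an entourage. -/
def UnifBdd (C : CoarseStructure X) (U : Set (Set X)) : Prop := C.IsEnt (famDiag U)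

/-- A family of subsets is `L`-disjoint. -/
def LDisj (L : Set (X × X)) (U : Set (Set X)) : Prop :=
  ∀ A ∈ U, ∀ B ∈ U, A ≠ B → (A ×ˢ B) ∩ L = ∅

/-- Coarse property C. -/
def CoarsePropC (C : CoarseStructure X) : Prop :=
  ∀ L : ℕ → Set (X × X), (∀ i, C.IsEnt (L i)) → (∀ i, L i ⊆ L (i + 1)) →
    ∃ n : ℕ, ∃ U : ℕ → Set (Set X),
      (∀ x : X, ∃ i < n, ∃ A ∈ U i, x ∈ A) ∧
      (∀ i < n, UnifBdd C (U i)) ∧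
      (∀ i < n, LDisj (L i) (U i))

/-- Coarse property C for a subspace `S ⊆ X` (with the inherited coarse structure). -/
def CoarsePropCOn (C : CoarseStructure X) (S : Set X) : Prop :=
  ∀ L : ℕ → Set (X × X), (∀ i, C.IsEnt (L i)) → (∀ i, L i ⊆ L (i + 1)) →
    ∃ n : ℕ, ∃ U : ℕ → Set (Set X),
      (∀ i < n, ∀ A ∈ U i, A ⊆ S) ∧
      (∀ x ∈ S, ∃ i < n, ∃ A ∈ U i, x ∈ A) ∧
      (∀ i < n, UnifBdd C (U i)) ∧
      (∀ i < n, LDisj (L i) (U i))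

/-- Coarse asymptotic dimension at most `n`. -/
def CoarseASDimLE (C : CoarseStructure X) (n : ℕ) : Prop :=
  ∀ L : Set (X × X), C.IsEnt L → ∃ U : ℕ → Set (Set X),
    (∀ x : X, ∃ i ≤ n, ∃ A ∈ U i, x ∈ A) ∧
    (∀ i ≤ n, UnifBdd C (U i)) ∧
    (∀ i ≤ n, LDisj L (U i))

/-- The extended natural-valued metric `D(x,y) = min {k : (x,y) ∈ E^k}` induced by `E`. -/
noncomputable def eDist (E : Set (X × X)) (x y : X) : ℕ∞ :=
  sInf ((fun k : ℕ => (k : ℕ∞)) '' {k : ℕ | (x, y) ∈ rpow E k})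

/-- Distance from a point to a set, for the metric induced by `E`. -/
noncomputable def eDistSet (E : Set (X × X)) (x : X) (A : Set X) : ℕ∞ :=
  sInf (eDist E x '' A)

/-- `ℝ≥0∞`-valued version of the metric induced by `E`. -/
noncomputable def nDist (E : Set (X × X)) (x y : X) : ℝ≥0∞ :=
  sInf ((fun k : ℕ => (k : ℝ≥0∞)) '' {k : ℕ | (x, y) ∈ rpow E k})

/-- `ℝ≥0∞`-valued distance from a point to a set. -/
noncomputable def nDistSet (E : Set (X × X)) (x : X) (A : Set X) : ℝ≥0∞ :=
  sInf (nDist E x '' A)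

/-- The map `f × f`. -/
def mapProd (f : X → Y) : X × X → Y × Y := fun p => (f p.1, f p.2)

/-- Bornologous maps: images of entourages are entourages. -/
def Bornologous (CX : CoarseStructure X) (CY : CoarseStructure Y) (f : X → Y) : Prop :=
  ∀ E : Set (X × X), CX.IsEnt E → CY.IsEnt (mapProd f '' E)

/-- Proper maps: preimages of bounded sets are bounded. -/
def ProperCoarse (CX : CoarseStructure X) (CY : CoarseStructure Y) (f : X → Y) : Prop :=
  ∀ B : Set Y, CY.IsEnt (B ×ˢ B) → CX.IsEnt ((f ⁻¹' B) ×ˢ (f ⁻¹' B))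

/-- A coarse map is proper and bornologous. -/
def CoarseMap (CX : CoarseStructure X) (CY : CoarseStructure Y) (f : X → Y) : Prop :=
  ProperCoarse CX CY f ∧ Bornologous CX CY f

/-- A coarsely uniform embedding. -/
def CoarseUnifEmb (CX : CoarseStructure X) (CY : CoarseStructure Y) (f : X → Y) : Prop :=
  ProperCoarse CX CY f ∧ Bornologous CX CY f ∧
    ∀ F : Set (Y × Y), CY.IsEnt F → CX.IsEnt (mapProd f ⁻¹' F)

/-- Two maps are close if the set of pairs of their values is an entourage. -/
def Close (C : CoarseStructure X) (f g : Y → X) : Prop :=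
  C.IsEnt (Set.range fun y => (f y, g y))

/-- Coarse equivalence of coarse spaces. -/
def CoarseEquiv (CX : CoarseStructure X) (CY : CoarseStructure Y) : Prop :=
  ∃ f : X → Y, ∃ g : Y → X, CoarseMap CX CY f ∧ CoarseMap CY CX g ∧
    Close CX (g ∘ f) id ∧ Close CY (f ∘ g) id

/-- A weak `(L,d)`-decomposition of the set `Z` over the family `Y`. -/
def WeakDecomp (L : Set (X × X)) (d : ℕ) (Z : Set X) (Y : Set (Set X)) : Prop :=
  ∃ P : Fin d → Set (Set X), (∀ i, P i ⊆ Y) ∧ (∀ i, LDisj L (P i)) ∧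
    Z = ⋃ i, ⋃ A ∈ P i, A

/-- A family admits a weak `(L,d)`-decomposition over `Y` if each member does. -/
def FamDecomp (L : Set (X × X)) (d : ℕ) (F Y : Set (Set X)) : Prop :=
  ∀ Z ∈ F, WeakDecomp L d Z Y

/-- Straight finite coarse decomposition complexity of a family of subsets. -/
def sFCDC (C : CoarseStructure X) (F : Set (Set X)) : Prop :=
  ∀ L : ℕ → Set (X × X), (∀ i, C.IsEnt (L i)) → (∀ i, L i ⊆ L (i + 1)) →
    ∃ n : ℕ, ∃ Y : ℕ → Set (Set X), Y 0 = F ∧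
      (∀ i < n, FamDecomp (L i) 2 (Y i) (Y (i + 1))) ∧ UnifBdd C (Y n)

/-- Finite weak coarse decomposition complexity (one-step form). -/
def FWCDC (C : CoarseStructure X) : Prop :=
  ∀ L : Set (X × X), C.IsEnt L →
    ∃ d : ℕ, ∃ Y : Set (Set X), UnifBdd C Y ∧ WeakDecomp L d Set.univ Y

/-- `N_L(V, U)`. -/
def NL (L : Set (X × X)) (U : Set (Set X)) (V : Set X) : Set X :=
  V ∪ ⋃ A ∈ {A ∈ U | ((A ×ˢ V) ∩ L).Nonempty}, A

/-- The `L`-saturated union `V ∪_L U`. -/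
def satUnion (L : Set (X × X)) (V U : Set (Set X)) : Set (Set X) :=
  (NL L U '' V) ∪ {A ∈ U | ∀ W ∈ V, (A ×ˢ W) ∩ L = ∅}

/-- The bounded coarse structure of a (pseudo)metric space. -/
def boundedCoarse (X : Type u) [PseudoMetricSpace X] : CoarseStructure X where
  IsEnt E := ∃ R : ℝ, ∀ p ∈ E, dist p.1 p.2 ≤ R
  subset_mem := fun h hsub => ⟨h.choose, fun p hp => h.choose_spec p (hsub hp)⟩
  union_mem := fun hE hF => ⟨max hE.choose hF.choose, by
    rintro p (hp | hp)
    · exact (hE.choose_spec p hp).trans (le_max_left _ _)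
    · exact (hF.choose_spec p hp).trans (le_max_right _ _)⟩
  diag_mem := ⟨0, by
    rintro ⟨a, b⟩ hab
    simp only [Set.mem_setOf_eq] at hab
    simp [hab]⟩
  inv_mem := fun hE => ⟨hE.choose, by
    intro p hp
    rw [dist_comm]
    exact hE.choose_spec _ hp⟩
  comp_mem := fun hE hF => ⟨hE.choose + hF.choose, by
    rintro p ⟨y, h1, h2⟩
    calc dist p.1 p.2 ≤ dist p.1 y + dist y p.2 := dist_triangle _ _ _
      _ ≤ _ := add_le_add (hE.choose_spec _ h1) (hF.choose_spec _ h2)⟩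

/-- Uniformly bounded family of subsets of a metric space. -/
def MUnifBdd {X : Type u} [PseudoMetricSpace X] (U : Set (Set X)) : Prop :=
  ∃ B : ℝ, ∀ A ∈ U, ∀ x ∈ A, ∀ y ∈ A, dist x y ≤ B

/-- `R`-disjoint family of subsets of a metric space. -/
def MDisj {X : Type u} [PseudoMetricSpace X] (R : ℝ) (U : Set (Set X)) : Prop :=
  ∀ A ∈ U, ∀ B ∈ U, A ≠ B → ∀ x ∈ A, ∀ y ∈ B, R < dist x y

/-- Asymptotic property C of a metric space. -/
def AsympPropC (X : Type u) [PseudoMetricSpace X] : Prop :=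
  ∀ R : ℕ → ℝ, (∀ i, 0 < R i) → (∀ i, R i ≤ R (i + 1)) →
    ∃ n : ℕ, ∃ U : ℕ → Set (Set X),
      (∀ x : X, ∃ i < n, ∃ A ∈ U i, x ∈ A) ∧
      (∀ i < n, MUnifBdd (U i)) ∧
      (∀ i < n, MDisj (R i) (U i))

/-- Coercion of pairs in a subspace to pairs in the ambient space. -/
def sprod (S : Set X) : S × S → X × X := fun p => ((p.1 : X), (p.2 : X))

/-- The subspace coarse structure. -/
def CoarseStructure.restrict (C : CoarseStructure X) (S : Set X) : CoarseStructure S where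
  IsEnt E := C.IsEnt (sprod S '' E)
  subset_mem := fun h hsub => C.subset_mem h (Set.image_mono hsub)
  union_mem := fun {E F} h1 h2 => by
    show C.IsEnt (sprod S '' (E ∪ F))
    rw [Set.image_union]; exact C.union_mem h1 h2
  diag_mem := C.subset_mem C.diag_mem (by
    rintro q ⟨p, hp, rfl⟩
    simp only [Set.mem_setOf_eq] at hp ⊢
    exact congrArg Subtype.val hp)
  inv_mem := fun {E} h => C.subset_mem (C.inv_mem h) (by
    rintro q ⟨p, hp, rfl⟩
    exact ⟨(p.2, p.1), hp, rfl⟩)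
  comp_mem := fun {E F} hE hF => C.subset_mem (C.comp_mem hE hF) (by
    rintro q ⟨p, ⟨y, h1, h2⟩, rfl⟩
    exact ⟨(y : X), ⟨(p.1, y), h1, rfl⟩, ⟨(y, p.2), h2, rfl⟩⟩)

/-- First-coordinate projection of a relation on a product. -/
def pfst : (X × Y) × (X × Y) → X × X := fun p => (p.1.1, p.2.1)

/-- Second-coordinate projection of a relation on a product. -/
def psnd : (X × Y) × (X × Y) → Y × Y := fun p => (p.1.2, p.2.2)

/-- The product coarse structure. -/
def prodCoarse (CX : CoarseStructure X) (CY : CoarseStructure Y) :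
    CoarseStructure (X × Y) where
  IsEnt E := CX.IsEnt (pfst '' E) ∧ CY.IsEnt (psnd '' E)
  subset_mem := fun h hsub =>
    ⟨CX.subset_mem h.1 (Set.image_mono hsub), CY.subset_mem h.2 (Set.image_mono hsub)⟩
  union_mem := fun {E F} h1 h2 => by
    constructor
    · show CX.IsEnt (pfst '' (E ∪ F))
      rw [Set.image_union]; exact CX.union_mem h1.1 h2.1
    · show CY.IsEnt (psnd '' (E ∪ F))
      rw [Set.image_union]; exact CY.union_mem h1.2 h2.2
  diag_mem := by
    constructor
    · exact CX.subset_mem CX.diag_mem (by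
        rintro q ⟨p, hp, rfl⟩
        simp only [Set.mem_setOf_eq] at hp ⊢
        exact congrArg Prod.fst hp)
    · exact CY.subset_mem CY.diag_mem (by
        rintro q ⟨p, hp, rfl⟩
        simp only [Set.mem_setOf_eq] at hp ⊢
        exact congrArg Prod.snd hp)
  inv_mem := fun {E} h => by
    constructor
    · exact CX.subset_mem (CX.inv_mem h.1) (by
        rintro q ⟨p, hp, rfl⟩
        exact ⟨(p.2, p.1), hp, rfl⟩)
    · exact CY.subset_mem (CY.inv_mem h.2) (by
        rintro q ⟨p, hp, rfl⟩
        exact ⟨(p.2, p.1), hp, rfl⟩)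
  comp_mem := fun {E F} hE hF => by
    constructor
    · exact CX.subset_mem (CX.comp_mem hE.1 hF.1) (by
        rintro q ⟨p, ⟨y, h1, h2⟩, rfl⟩
        exact ⟨y.1, ⟨(p.1, y), h1, rfl⟩, ⟨(y, p.2), h2, rfl⟩⟩)
    · exact CY.subset_mem (CY.comp_mem hE.2 hF.2) (by
        rintro q ⟨p, ⟨y, h1, h2⟩, rfl⟩
        exact ⟨y.2, ⟨(p.1, y), h1, rfl⟩, ⟨(y, p.2), h2, rfl⟩⟩)

/-- Game-theoretic coarse property C: Player 2 has a winning strategy. -/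
def GamePropC (C : CoarseStructure X) : Prop :=
  ∃ σ : ℕ → (ℕ → Set (X × X)) → Set (Set X),
    (∀ n : ℕ, ∀ L L' : ℕ → Set (X × X), (∀ i ≤ n, L i = L' i) → σ n L = σ n L') ∧
    ∀ L : ℕ → Set (X × X), (∀ i, C.IsEnt (L i)) →
      ∃ k : ℕ, (∀ i ≤ k, UnifBdd C (σ i L) ∧ LDisj (L i) (σ i L)) ∧
        ∀ x : X, ∃ i ≤ k, ∃ A ∈ σ i L, x ∈ A

section Aux

variable {X : Type u}

lemma mem_famDiag {U : Set (Set X)} {x y : X} :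
    (x, y) ∈ famDiag U ↔ ∃ A ∈ U, x ∈ A ∧ y ∈ A := by
  simp only [famDiag, Set.mem_iUnion, Set.mem_prod]
  tauto

lemma famDiag_symm (U : Set (Set X)) : SymmRel (famDiag U) := by
  rintro ⟨x, y⟩ h
  rw [mem_famDiag] at h ⊢
  obtain ⟨A, hA, hx, hy⟩ := h
  exact ⟨A, hA, hy, hx⟩

/-- The big entourage used in the saturated-union construction. -/
def Kof (L D : Set (X × X)) : Set (X × X) :=
  L ∪ rcomp (rcomp L D) L ∪ rcomp (rcomp (rcomp (rcomp L D) L) D) L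

lemma Kof_ent (C : CoarseStructure X) {L D : Set (X × X)} (hL : C.IsEnt L)
    (hD : C.IsEnt D) : C.IsEnt (Kof L D) :=
  C.union_mem (C.union_mem hL (C.comp_mem (C.comp_mem hL hD) hL))
    (C.comp_mem (C.comp_mem (C.comp_mem (C.comp_mem hL hD) hL) hD) hL)

lemma Kof_symm {L D : Set (X × X)} (hL : SymmRel L) (hD : SymmRel D) :
    SymmRel (Kof L D) := by
  rintro ⟨x, y⟩ h
  rcases h with (h | h) | h
  · exact Or.inl (Or.inl (hL _ h))
  · obtain ⟨b, ⟨a, h1, h2⟩, h3⟩ := h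
    exact Or.inl (Or.inr ⟨a, ⟨b, hL _ h3, hD _ h2⟩, hL _ h1⟩)
  · obtain ⟨d, ⟨c, ⟨b, ⟨a, h1, h2⟩, h3⟩, h4⟩, h5⟩ := h
    exact Or.inr ⟨a, ⟨b, ⟨c, ⟨d, hL _ h5, hD _ h4⟩, hL _ h3⟩, hD _ h2⟩, hL _ h1⟩

lemma mem_NL {L : Set (X × X)} {U : Set (Set X)} {W : Set X} {x : X}
    (h : x ∈ NL L U W) :
    x ∈ W ∨ ∃ A ∈ U, x ∈ A ∧ ∃ a ∈ A, ∃ w ∈ W, (a, w) ∈ L := by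
  rcases h with h | h
  · exact Or.inl h
  · simp only [Set.mem_iUnion] at h
    obtain ⟨A, ⟨hAU, hne⟩, hx⟩ := h
    obtain ⟨⟨a, w⟩, ⟨⟨ha, hw⟩, hl⟩⟩ := hne
    exact Or.inr ⟨A, hAU, hx, a, ha, w, hw, hl⟩

lemma disj_swap {L : Set (X × X)} (hLs : SymmRel L) {A B : Set X}
    (h : (A ×ˢ B) ∩ L = ∅) : (B ×ˢ A) ∩ L = ∅ := by
  rw [Set.eq_empty_iff_forall_notMem] at h ⊢
  rintro ⟨y, x⟩ ⟨⟨hy, hx⟩, hl⟩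
  exact h (x, y) ⟨⟨hx, hy⟩, hLs _ hl⟩

lemma LDisj_mono {K M : Set (X × X)} (h : K ⊆ M) {U : Set (Set X)}
    (hU : LDisj M U) : LDisj K U := by
  intro A hA B hB hne
  have := hU A hA B hB hne
  rw [Set.eq_empty_iff_forall_notMem] at this ⊢
  rintro p ⟨hp1, hp2⟩
  exact this p ⟨hp1, h hp2⟩

lemma sat_cover {L : Set (X × X)} {U V : Set (Set X)} (x : X)
    (h : (∃ A ∈ U, x ∈ A) ∨ (∃ W ∈ V, x ∈ W)) :
    ∃ B ∈ satUnion L V U, x ∈ B := by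
  rcases h with ⟨A, hA, hx⟩ | ⟨W, hW, hx⟩
  · by_cases hc : ∃ W ∈ V, ((A ×ˢ W) ∩ L).Nonempty
    · obtain ⟨W, hW, hne⟩ := hc
      refine ⟨NL L U W, Or.inl ⟨W, hW, rfl⟩, Or.inr ?_⟩
      exact Set.mem_biUnion ⟨hA, hne⟩ hx
    · push_neg at hc
      exact ⟨A, Or.inr ⟨hA, hc⟩, hx⟩
  · exact ⟨NL L U W, Or.inl ⟨W, hW, rfl⟩, Or.inl hx⟩

lemma sat_unifBdd (C : CoarseStructure X) {L : Set (X × X)} (hL : C.IsEnt L)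
    (hLs : SymmRel L) {U V : Set (Set X)} (hU : UnifBdd C U) (hV : UnifBdd C V) :
    UnifBdd C (satUnion L V U) := by
  set DU := famDiag U
  set DV := famDiag V
  refine C.subset_mem (F := DV ∪ DU ∪ rcomp (rcomp DU L) DV ∪ rcomp (rcomp DV L) DU
      ∪ rcomp (rcomp (rcomp (rcomp DU L) DV) L) DU)
    (C.union_mem (C.union_mem (C.union_mem (C.union_mem hV hU)
      (C.comp_mem (C.comp_mem hU hL) hV)) (C.comp_mem (C.comp_mem hV hL) hU))
      (C.comp_mem (C.comp_mem (C.comp_mem (C.comp_mem hU hL) hV) hL) hU)) ?_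
  rintro ⟨x, y⟩ hmem
  rw [mem_famDiag] at hmem
  obtain ⟨B, hB, hx, hy⟩ := hmem
  rcases hB with ⟨W, hW, rfl⟩ | ⟨hBU, -⟩
  · -- B = NL L U W
    rcases mem_NL hx with hx | ⟨A, hAU, hxA, a, ha, w, hw, hl⟩ <;>
      rcases mem_NL hy with hy | ⟨A', hAU', hyA, a', ha', w', hw', hl'⟩
    · exact Or.inl (Or.inl (Or.inl (Or.inl (mem_famDiag.mpr ⟨W, hW, hx, hy⟩))))
    · -- x ∈ W, y ∈ A'
      refine Or.inl (Or.inr ?_)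
      exact ⟨a', ⟨w', mem_famDiag.mpr ⟨W, hW, hx, hw'⟩, hLs _ hl'⟩,
        mem_famDiag.mpr ⟨A', hAU', ha', hyA⟩⟩
    · -- x ∈ A, y ∈ W
      refine Or.inl (Or.inl (Or.inr ?_))
      exact ⟨w, ⟨a, mem_famDiag.mpr ⟨A, hAU, hxA, ha⟩, hl⟩,
        mem_famDiag.mpr ⟨W, hW, hw, hy⟩⟩
    · -- x ∈ A, y ∈ A'
      refine Or.inr ?_
      exact ⟨a', ⟨w', ⟨w, ⟨a, mem_famDiag.mpr ⟨A, hAU, hxA, ha⟩, hl⟩,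
        mem_famDiag.mpr ⟨W, hW, hw, hw'⟩⟩, hLs _ hl'⟩,
        mem_famDiag.mpr ⟨A', hAU', ha', hyA⟩⟩
  · exact Or.inl (Or.inl (Or.inl (Or.inr (mem_famDiag.mpr ⟨B, hBU, hx, hy⟩))))

lemma sat_disj {L : Set (X × X)} (hLs : SymmRel L) {U V : Set (Set X)}
    (hUd : LDisj L U) (hVd : LDisj (Kof L (famDiag U)) V) :
    LDisj L (satUnion L V U) := by
  -- key: NL W is L-disjoint from any member of the filtered part
  have key : ∀ W ∈ V, ∀ B ∈ U, (∀ W' ∈ V, (B ×ˢ W') ∩ L = ∅) →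
      ((NL L U W ×ˢ B) ∩ L = ∅) := by
    intro W hW B hBU hBdisj
    rw [Set.eq_empty_iff_forall_notMem]
    rintro ⟨x, y⟩ ⟨⟨hx, hy⟩, hl⟩
    rcases mem_NL hx with hx | ⟨A, hAU, hxA, a, ha, w, hw, hlaw⟩
    · have := hBdisj W hW
      rw [Set.eq_empty_iff_forall_notMem] at this
      exact this (y, x) ⟨⟨hy, hx⟩, hLs _ hl⟩
    · by_cases hAB : A = B
      · subst hAB
        have := hBdisj W hW
        rw [Set.eq_empty_iff_forall_notMem] at this
        exact this (a, w) ⟨⟨ha, hw⟩, hlaw⟩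
      · have := hUd A hAU B hBU hAB
        rw [Set.eq_empty_iff_forall_notMem] at this
        exact this (x, y) ⟨⟨hxA, hy⟩, hl⟩
  intro A hA B hB hne
  rcases hA with ⟨W, hW, rfl⟩ | ⟨hAU, hAdisj⟩ <;>
    rcases hB with ⟨W', hW', rfl⟩ | ⟨hBU, hBdisj⟩
  · -- both saturated
    have hWW' : W ≠ W' := by rintro rfl; exact hne rfl
    have hVK := hVd W hW W' hW' hWW'
    rw [Set.eq_empty_iff_forall_notMem] at hVK ⊢
    rintro ⟨x, y⟩ ⟨⟨hx, hy⟩, hl⟩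
    rcases mem_NL hx with hx | ⟨A, hAU, hxA, a, ha, w, hw, hlaw⟩ <;>
      rcases mem_NL hy with hy | ⟨A', hAU', hyA, a', ha', w', hw', hlaw'⟩
    · exact hVK (x, y) ⟨⟨hx, hy⟩, Or.inl (Or.inl hl)⟩
    · exact hVK (x, w') ⟨⟨hx, hw'⟩, Or.inl (Or.inr
        ⟨a', ⟨y, hl, mem_famDiag.mpr ⟨A', hAU', hyA, ha'⟩⟩, hlaw'⟩)⟩
    · exact hVK (w, y) ⟨⟨hw, hy⟩, Or.inl (Or.inr
        ⟨x, ⟨a, hLs _ hlaw, mem_famDiag.mpr ⟨A, hAU, ha, hxA⟩⟩, hl⟩)⟩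
    · exact hVK (w, w') ⟨⟨hw, hw'⟩, Or.inr
        ⟨a', ⟨y, ⟨x, ⟨a, hLs _ hlaw, mem_famDiag.mpr ⟨A, hAU, ha, hxA⟩⟩, hl⟩,
          mem_famDiag.mpr ⟨A', hAU', hyA, ha'⟩⟩, hlaw'⟩⟩
  · exact key W hW B hBU hBdisj
  · exact disj_swap hLs (key W' hW' A hAU hAdisj)
  · exact hUd A hAU B hBU hne

open scoped Classical in
/-- The recursively defined sequence of Player 1's moves. -/
noncomputable def Hseq (C : CoarseStructure X)
    (σ : ℕ → (ℕ → Set (X × X)) → Set (Set X)) (L0 : Set (X × X)) :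
    ℕ → ℕ → Set (X × X)
  | 0 => fun _ => L0
  | n + 1 => fun i =>
      if i ≤ n then Hseq C σ L0 n i
      else if C.IsEnt (famDiag (σ n (Hseq C σ L0 n)))
        then Kof (Hseq C σ L0 n n) (famDiag (σ n (Hseq C σ L0 n)))
        else Hseq C σ L0 n n

lemma Hseq_stab (C : CoarseStructure X)
    (σ : ℕ → (ℕ → Set (X × X)) → Set (Set X)) (L0 : Set (X × X)) :
    ∀ n i, i ≤ n → Hseq C σ L0 n i = Hseq C σ L0 i i := by
  intro n
  induction n with
  | zero =>
    intro i hi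
    have : i = 0 := Nat.le_zero.mp hi
    subst this; rfl
  | succ n ih =>
    intro i hi
    by_cases h : i ≤ n
    · have : Hseq C σ L0 (n + 1) i = Hseq C σ L0 n i := by
        simp only [Hseq]
        rw [if_pos h]
      rw [this]; exact ih i h
    · have : i = n + 1 := by omega
      subst this; rfl

open scoped Classical in
lemma Hseq_succ (C : CoarseStructure X)
    (σ : ℕ → (ℕ → Set (X × X)) → Set (Set X)) (L0 : Set (X × X)) (n : ℕ) :
    Hseq C σ L0 (n + 1) (n + 1) =
      if C.IsEnt (famDiag (σ n (Hseq C σ L0 n))) then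
        Kof (Hseq C σ L0 n n) (famDiag (σ n (Hseq C σ L0 n)))
      else Hseq C σ L0 n n := by
  simp only [Hseq]
  rw [if_neg (by omega)]

end Aux

/-- game-theoretic coarse property C holds iff the coarse asymptotic
dimension is `0`. -/
theorem stmt18 {X : Type u} (C : CoarseStructure X) :
    GamePropC C ↔ CoarseASDimLE C 0 := by
  constructor
  · -- game property C implies asymptotic dimension 0
    rintro ⟨σ, hcons, hwin⟩ L hLent
    classical
    set L0 : Set (X × X) := L ∪ {p : X × X | (p.2, p.1) ∈ L} with hL0def
    have hL0ent : C.IsEnt L0 := C.union_mem hLent (C.inv_mem hLent)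
    have hL0symm : SymmRel L0 := by
      rintro ⟨x, y⟩ (h | h)
      · exact Or.inr h
      · exact Or.inl h
    set Ls : ℕ → Set (X × X) := fun i => Hseq C σ L0 i i with hLsdef
    have hstab : ∀ n i, i ≤ n → Hseq C σ L0 n i = Ls i := fun n i hi =>
      Hseq_stab C σ L0 n i hi
    have hσeq : ∀ n, σ n (Hseq C σ L0 n) = σ n Ls := fun n =>
      hcons n _ _ (fun i hi => hstab n i hi)
    have hsucc : ∀ n, Ls (n + 1) =
        if C.IsEnt (famDiag (σ n Ls)) then Kof (Ls n) (famDiag (σ n Ls))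
        else Ls n := by
      intro n
      have h1 := Hseq_succ C σ L0 n
      rw [hσeq n] at h1
      exact h1
    have hprop : ∀ n, C.IsEnt (Ls n) ∧ SymmRel (Ls n) := by
      intro n
      induction n with
      | zero => exact ⟨hL0ent, hL0symm⟩
      | succ n ih =>
        rw [hsucc n]
        by_cases h : C.IsEnt (famDiag (σ n Ls))
        · rw [if_pos h]
          exact ⟨Kof_ent C ih.1 h, Kof_symm ih.2 (famDiag_symm _)⟩
        · rw [if_neg h]; exact ih
    obtain ⟨k, hgood, hcov⟩ := hwin Ls (fun i => (hprop i).1)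
    have hKeq : ∀ i ≤ k, Ls (i + 1) = Kof (Ls i) (famDiag (σ i Ls)) := by
      intro i hi
      have hb : C.IsEnt (famDiag (σ i Ls)) := (hgood i hi).1
      rw [hsucc i, if_pos hb]
    have claim : ∀ m, m ≤ k → ∃ W : Set (Set X), UnifBdd C W ∧
        LDisj (Ls (k - m)) W ∧
        ∀ x : X, (∃ j, k - m ≤ j ∧ j ≤ k ∧ ∃ A ∈ σ j Ls, x ∈ A) →
          ∃ B ∈ W, x ∈ B := by
      intro m
      induction m with
      | zero =>
        intro _
        refine ⟨σ k Ls, (hgood k le_rfl).1, by simpa using (hgood k le_rfl).2, ?_⟩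
        rintro x ⟨j, hj1, hj2, hA⟩
        have : j = k := by omega
        subst this; exact hA
      | succ m ih =>
        intro hm
        obtain ⟨W', hW'bdd, hW'disj, hW'cov⟩ := ih (by omega)
        set i := k - (m + 1) with hidef
        have hik : i + 1 = k - m := by omega
        have hi_le : i ≤ k := by omega
        have hUbdd : UnifBdd C (σ i Ls) := (hgood i hi_le).1
        have hUdisj : LDisj (Ls i) (σ i Ls) := (hgood i hi_le).2
        have hW'disjK : LDisj (Kof (Ls i) (famDiag (σ i Ls))) W' := by
          rw [← hKeq i (by omega), hik]; exact hW'disj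
        refine ⟨satUnion (Ls i) W' (σ i Ls),
          sat_unifBdd C (hprop i).1 (hprop i).2 hUbdd hW'bdd,
          sat_disj (hprop i).2 hUdisj hW'disjK, ?_⟩
        rintro x ⟨j, hj1, hj2, A, hA, hx⟩
        by_cases hji : j = i
        · subst hji; exact sat_cover x (Or.inl ⟨A, hA, hx⟩)
        · obtain ⟨B, hB, hxB⟩ := hW'cov x ⟨j, by omega, hj2, A, hA, hx⟩
          exact sat_cover x (Or.inr ⟨B, hB, hxB⟩)
    obtain ⟨W, hWbdd, hWdisj, hWcov⟩ := claim k le_rfl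
    have hWdisj0 : LDisj (Ls 0) W := by
      have : k - k = 0 := Nat.sub_self k
      rwa [this] at hWdisj
    refine ⟨fun _ => W, ?_, fun i _ => hWbdd, fun i _ => ?_⟩
    · intro x
      obtain ⟨i, hik, A, hA, hx⟩ := hcov x
      obtain ⟨B, hB, hxB⟩ := hWcov x ⟨i, by omega, hik, A, hA, hx⟩
      exact ⟨0, le_rfl, B, hB, hxB⟩
    · exact LDisj_mono Set.subset_union_left hWdisj0
  · -- asymptotic dimension 0 implies game property C
    intro h
    classical
    set pick : Set (X × X) → Set (Set X) :=
      fun E => if hh : C.IsEnt E then (h E hh).choose 0 else ∅ with hpick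
    refine ⟨fun n L => pick (L n),
      fun n L L' hLL' => congrArg pick (hLL' n le_rfl), ?_⟩
    intro L hL
    have hpick0 : pick (L 0) = (h (L 0) (hL 0)).choose 0 := by
      simp only [hpick]
      exact dif_pos (hL 0)
    obtain ⟨hcov, hbdd, hdisj⟩ := (h (L 0) (hL 0)).choose_spec
    refine ⟨0, ?_, ?_⟩
    · intro i hi
      have : i = 0 := Nat.le_zero.mp hi
      subst this
      show UnifBdd C (pick (L 0)) ∧ LDisj (L 0) (pick (L 0))
      rw [hpick0]
      exact ⟨hbdd 0 le_rfl, hdisj 0 le_rfl⟩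
    · intro x
      obtain ⟨i, hi, A, hA, hx⟩ := hcov x
      have : i = 0 := Nat.le_zero.mp hi
      subst this
      refine ⟨0, le_rfl, A, ?_, hx⟩
      show A ∈ pick (L 0)
      rw [hpick0]
      exact hA
end

section
/- Let (X, E) be a coarse space with coarse property C. Then X has coarse property A: for every ε > 0 and every symmetric entourage E containing the diagonal, there exists a map a : X → ℓ¹(X), x ↦ a_x, such that ‖a_x‖₁ = 1 for all x, ‖a_x − a_y‖₁ < ε whenever (x,y) ∈ E, and there exists an entourage S with supp(a_x) ⊆ S[x] for all x. -/
open Set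
open scoped ENNReal

universe u v

variable {X : Type u} {Y : Type v}

section AuxStmt19

variable {X : Type u}

lemma rpow_isEnt (C : CoarseStructure X) {E : Set (X × X)} (hE : C.IsEnt E) :
    ∀ m, C.IsEnt (rpow E m)
  | 0 => C.diag_mem
  | m + 1 => C.comp_mem (rpow_isEnt C hE m) hE

lemma rpow_refl {E : Set (X × X)} (hrefl : ∀ x, (x, x) ∈ E) :
    ∀ m (x : X), (x, x) ∈ rpow E m
  | 0, _ => rfl
  | m + 1, x => ⟨x, rpow_refl hrefl m x, hrefl x⟩

lemma rpow_trans {E : Set (X × X)} :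
    ∀ {m j : ℕ} {x y z : X}, (x, y) ∈ rpow E j → (y, z) ∈ rpow E m → (x, z) ∈ rpow E (j + m)
  | 0, _, _, _, _, h1, h2 => by
    have h : _ = _ := h2
    dsimp at h
    subst h; exact h1
  | m + 1, _, _, _, _, h1, ⟨w, hw1, hw2⟩ => ⟨w, rpow_trans h1 hw1, hw2⟩

lemma mem_rpow_one {E : Set (X × X)} {x y : X} (h : (x, y) ∈ E) : (x, y) ∈ rpow E 1 :=
  ⟨x, rfl, h⟩

lemma rpow_mono {E : Set (X × X)} (hrefl : ∀ x, (x, x) ∈ E) {m m' : ℕ} (h : m ≤ m') :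
    rpow E m ⊆ rpow E m' := by
  rintro ⟨x, y⟩ hxy
  have := rpow_trans (E := E) hxy (rpow_refl hrefl (m' - m) y)
  rwa [Nat.add_sub_cancel' h] at this

lemma rpow_symm {E : Set (X × X)} (hs : SymmRel E) :
    ∀ m {x y : X}, (x, y) ∈ rpow E m → (y, x) ∈ rpow E m := by
  intro m
  induction m with
  | zero => intro x y h; exact (h : x = y).symm
  | succ m ih =>
    intro x y h
    obtain ⟨w, h1, h2⟩ := h
    have := rpow_trans (E := E) (mem_rpow_one (hs _ h2)) (ih h1)
    rwa [Nat.add_comm] at this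

lemma ent_biUnion (C : CoarseStructure X) :
    ∀ (k : ℕ) (f : ℕ → Set (X × X)), (∀ i < k, C.IsEnt (f i)) →
      C.IsEnt (⋃ i ∈ Finset.range k, f i) := by
  intro k
  induction k with
  | zero =>
    intro f _
    refine C.subset_mem C.diag_mem ?_
    simp
  | succ k ih =>
    intro f hf
    have : (⋃ i ∈ Finset.range (k + 1), f i) = f k ∪ ⋃ i ∈ Finset.range k, f i := by
      rw [Finset.range_add_one]
      simp [Set.biUnion_insert]
    rw [this]
    exact C.union_mem (hf k (Nat.lt_succ_self k)) (ih f fun i hi => hf i (hi.trans (Nat.lt_succ_self k)))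

lemma norm_normalize_sub {V : Type*} [NormedAddCommGroup V] [NormedSpace ℝ V]
    (u v : V) (hu : 0 < ‖u‖) (hv : 0 < ‖v‖) :
    ‖‖u‖⁻¹ • u - ‖v‖⁻¹ • v‖ ≤ 2 * ‖u - v‖ / ‖u‖ := by
  have h1 : ‖u‖⁻¹ • u - ‖v‖⁻¹ • v = ‖u‖⁻¹ • (u - v) + (‖u‖⁻¹ - ‖v‖⁻¹) • v := by
    rw [smul_sub, sub_smul]; abel
  rw [h1]
  have h2 : ‖‖u‖⁻¹ • (u - v)‖ = ‖u - v‖ / ‖u‖ := by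
    rw [norm_smul, Real.norm_eq_abs, abs_of_pos (inv_pos.mpr hu), inv_mul_eq_div]
  have h3 : ‖(‖u‖⁻¹ - ‖v‖⁻¹) • v‖ ≤ ‖u - v‖ / ‖u‖ := by
    rw [norm_smul, Real.norm_eq_abs]
    have e : ‖u‖⁻¹ - ‖v‖⁻¹ = (‖v‖ - ‖u‖) / (‖u‖ * ‖v‖) := by
      field_simp
    rw [e, abs_div, abs_of_pos (mul_pos hu hv)]
    have habs : |‖v‖ - ‖u‖| ≤ ‖u - v‖ := by
      have := abs_norm_sub_norm_le v u
      rwa [norm_sub_rev] at this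
    rw [div_mul_eq_mul_div]
    rw [div_le_div_iff₀ (mul_pos hu hv) hu]
    calc |‖v‖ - ‖u‖| * ‖v‖ * ‖u‖ ≤ ‖u - v‖ * ‖v‖ * ‖u‖ := by
          apply mul_le_mul_of_nonneg_right (mul_le_mul_of_nonneg_right habs hv.le) hu.le
      _ = ‖u - v‖ * (‖u‖ * ‖v‖) := by ring
  calc ‖‖u‖⁻¹ • (u - v) + (‖u‖⁻¹ - ‖v‖⁻¹) • v‖
      ≤ ‖‖u‖⁻¹ • (u - v)‖ + ‖(‖u‖⁻¹ - ‖v‖⁻¹) • v‖ := norm_add_le _ _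
    _ ≤ ‖u - v‖ / ‖u‖ + ‖u - v‖ / ‖u‖ := by rw [h2]; exact add_le_add_right h3 _
    _ = 2 * ‖u - v‖ / ‖u‖ := by ring

lemma lp_single_sub {α : Type u} [DecidableEq α] (j : α) (u v : ℝ) :
    lp.single (E := fun _ : α => ℝ) 1 j u - lp.single 1 j v = lp.single 1 j (u - v) := by
  apply lp.ext
  funext z
  rw [lp.coeFn_sub, Pi.sub_apply]
  by_cases hz : z = j
  · subst hz
    rw [lp.single_apply_self, lp.single_apply_self, lp.single_apply_self]
  · rw [lp.single_apply_ne _ _ _ hz, lp.single_apply_ne _ _ _ hz, lp.single_apply_ne _ _ _ hz,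
      sub_zero]

lemma lp_norm_single {α : Type u} [DecidableEq α] (j : α) (v : ℝ) :
    ‖lp.single (E := fun _ : α => ℝ) 1 j v‖ = |v| := by
  have := lp.norm_single (E := fun _ : α => ℝ) (p := 1) (by norm_num) j v
  simpa using this


/-- There is a set of `U` containing a point within `rpow E q` of `x`. -/
def nearAt (E : Set (X × X)) (U : Set (Set X)) (q : ℕ) (x : X) : Prop :=
  ∃ A ∈ U, ∃ a ∈ A, (x, a) ∈ rpow E q

open Classical in
/-- The bump function value at `x`. -/
noncomputable def phiC (E : Set (X × X)) (U : Set (Set X)) (q : ℕ) (x : X) : ℕ :=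
  if nearAt E U q x then q - sInf {r | nearAt E U r x} else 0

open Classical in
/-- A choice of point in a set. -/
noncomputable def ptC [Nonempty X] (A : Set X) : X :=
  if h : A.Nonempty then h.choose else Classical.arbitrary X

open Classical in
/-- The chosen witness set near `x`. -/
noncomputable def WsetC (E : Set (X × X)) (U : Set (Set X)) (q : ℕ) (x : X) : Set X :=
  if h : nearAt E U q x then h.choose else ∅

/-- The chosen base point near `x`. -/
noncomputable def selC [Nonempty X] (E : Set (X × X)) (U : Set (Set X)) (q : ℕ) (x : X) : X :=
  ptC (WsetC E U q x)

variable {E : Set (X × X)} {U : Set (Set X)} {q : ℕ} {x y : X}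

lemma nearAt_mono (hrefl : ∀ z : X, (z, z) ∈ E) {q q' : ℕ} (h : nearAt E U q x)
    (hq : q ≤ q') : nearAt E U q' x := by
  obtain ⟨A, hA, a, ha, hxa⟩ := h
  exact ⟨A, hA, a, ha, rpow_mono hrefl hq hxa⟩

lemma phiC_le : phiC E U q x ≤ q := by
  unfold phiC; split <;> omega

lemma near_of_phiC_pos (h : 0 < phiC E U q x) : nearAt E U q x := by
  by_contra hn
  rw [phiC, if_neg hn] at h
  exact absurd h (lt_irrefl 0)

lemma phiC_eq_of_mem (hrefl : ∀ z : X, (z, z) ∈ E) {A : Set X} (hA : A ∈ U) (hx : x ∈ A) :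
    phiC E U q x = q := by
  have h0 : nearAt E U 0 x := ⟨A, hA, x, hx, rfl⟩
  have hnear : nearAt E U q x := nearAt_mono hrefl h0 (Nat.zero_le q)
  unfold phiC
  rw [if_pos hnear]
  have h1 : sInf {r | nearAt E U r x} ≤ 0 := Nat.sInf_le h0
  omega

lemma phiC_lip (hrefl : ∀ z : X, (z, z) ∈ E) (hsymm : SymmRel E) (hxy : (x, y) ∈ E) :
    phiC E U q x ≤ phiC E U q y + 1 := by
  by_cases hx : nearAt E U q x
  · unfold phiC
    rw [if_pos hx]
    by_cases hs : q ≤ sInf {r | nearAt E U r x}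
    · omega
    · push_neg at hs
      have hmem : sInf {r | nearAt E U r x} ∈ {r | nearAt E U r x} := Nat.sInf_mem ⟨q, hx⟩
      obtain ⟨A, hA, a, ha, hxa⟩ := hmem
      have hya : (y, a) ∈ rpow E (sInf {r | nearAt E U r x} + 1) := by
        have := rpow_trans (E := E) (mem_rpow_one (hsymm _ hxy)) hxa
        rwa [Nat.add_comm] at this
      have hy1 : nearAt E U (sInf {r | nearAt E U r x} + 1) y := ⟨A, hA, a, ha, hya⟩
      have hyq : nearAt E U q y := nearAt_mono hrefl hy1 (by omega)
      rw [if_pos hyq]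
      have h2 : sInf {r | nearAt E U r y} ≤ sInf {r | nearAt E U r x} + 1 := Nat.sInf_le hy1
      omega
  · unfold phiC; rw [if_neg hx]; omega

lemma WsetC_spec (h : nearAt E U q x) :
    WsetC E U q x ∈ U ∧ ∃ a ∈ WsetC E U q x, (x, a) ∈ rpow E q := by
  unfold WsetC
  rw [dif_pos h]
  exact h.choose_spec

lemma selC_mem [Nonempty X] (h : nearAt E U q x) : selC E U q x ∈ WsetC E U q x := by
  obtain ⟨-, a, ha, -⟩ := WsetC_spec h
  have hne : (WsetC E U q x).Nonempty := ⟨a, ha⟩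
  unfold selC ptC
  rw [dif_pos hne]
  exact hne.choose_spec

end AuxStmt19

/-- coarse property C implies coarse property A. -/
theorem stmt19 {X : Type u} (C : CoarseStructure X) (h : CoarsePropC C) :
    ∀ ε : ℝ, 0 < ε → ∀ E : Set (X × X), C.IsEnt E → SymmRel E →
      (∀ x : X, (x, x) ∈ E) →
      ∃ a : X → lp (fun _ : X => ℝ) 1,
        (∀ x : X, ‖a x‖ = 1) ∧
        (∀ x y : X, (x, y) ∈ E → ‖a x - a y‖ < ε) ∧
        ∃ S : Set (X × X), C.IsEnt S ∧
          ∀ x y : X, (a x : ∀ _ : X, ℝ) y ≠ 0 → (y, x) ∈ S := by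
  intro ε hε E hEent hEsymm hErefl
  classical
  by_cases hX : Nonempty X
  swap
  · exact ⟨fun _ => 0, fun x => absurd ⟨x⟩ hX, fun x y _ => absurd ⟨x⟩ hX, E, hEent,
      fun x y _ => absurd ⟨x⟩ hX⟩
  haveI := hX
  set n : ℕ := ⌈2 / ε⌉₊ + 2 with hn
  have hn2 : 2 ≤ n := Nat.le_add_left 2 _
  have hnR : (2 : ℝ) ≤ (n : ℝ) := by exact_mod_cast hn2
  have hne1 : (n : ℝ) ≠ 1 := by linarith
  have hnpos : (0 : ℝ) < (n : ℝ) - 1 := by linarith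
  have hkey : 2 / ((n : ℝ) - 1) < ε := by
    rw [div_lt_iff₀ hnpos]
    have hceil : 2 / ε ≤ (⌈2 / ε⌉₊ : ℝ) := Nat.le_ceil _
    rw [div_le_iff₀ hε] at hceil
    have hn' : (n : ℝ) = (⌈2 / ε⌉₊ : ℝ) + 2 := by rw [hn]; push_cast; ring
    nlinarith [hceil, hε]
  set Q : ℕ → ℕ := fun i => n ^ (i + 1) with hQ
  have hQ1 : ∀ i, 1 ≤ Q i := fun i => Nat.one_le_pow _ _ (by omega)
  set L : ℕ → Set (X × X) := fun i => rpow E (4 * Q i) with hL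
  have hLent : ∀ i, C.IsEnt (L i) := fun i => rpow_isEnt C hEent _
  have hLmono : ∀ i, L i ⊆ L (i + 1) := by
    intro i
    apply rpow_mono hErefl
    have : Q i ≤ Q (i + 1) := Nat.pow_le_pow_right (by omega) (by omega)
    omega
  obtain ⟨k, U, hcov, hbdd, hdisj⟩ := h L hLent hLmono
  have huniq : ∀ i < k, ∀ x y : X, (x, y) ∈ E → ∀ A ∈ U i, ∀ B ∈ U i,
      (∃ a ∈ A, (x, a) ∈ rpow E (Q i)) → (∃ b ∈ B, (y, b) ∈ rpow E (Q i)) → A = B := by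
    rintro i hi x y hxy A hA B hB ⟨a, ha, hxa⟩ ⟨b, hb, hyb⟩
    by_contra hAB
    have hax : (a, x) ∈ rpow E (Q i) := rpow_symm hEsymm _ hxa
    have h1 : (a, b) ∈ rpow E (Q i + 1 + Q i) :=
      rpow_trans (rpow_trans hax (mem_rpow_one hxy)) hyb
    have h2 : (a, b) ∈ L i := rpow_mono hErefl (by have := hQ1 i; omega) h1
    have h3 := hdisj i hi A hA B hB hAB
    rw [Set.eq_empty_iff_forall_notMem] at h3
    exact h3 (a, b) ⟨Set.mk_mem_prod ha hb, h2⟩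
  have hseleq : ∀ i < k, ∀ x y : X, (x, y) ∈ E → nearAt E (U i) (Q i) x →
      nearAt E (U i) (Q i) y → selC E (U i) (Q i) x = selC E (U i) (Q i) y := by
    intro i hi x y hxy hx hy
    obtain ⟨hAU, hwa⟩ := WsetC_spec hx
    obtain ⟨hBU, hwb⟩ := WsetC_spec hy
    have hW : WsetC E (U i) (Q i) x = WsetC E (U i) (Q i) y :=
      huniq i hi x y hxy _ hAU _ hBU hwa hwb
    unfold selC
    rw [hW]
  set t : ℕ → X → lp (fun _ : X => ℝ) 1 := fun i x =>
    lp.single 1 (selC E (U i) (Q i) x) ((n : ℝ) ^ (k - 1 - i) * (phiC E (U i) (Q i) x : ℝ))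
    with htdef
  set b : X → lp (fun _ : X => ℝ) 1 := fun x => ∑ i ∈ Finset.range k, t i x with hbdef
  have htnn : ∀ i (x : X) (z : X), 0 ≤ (t i x : ∀ _ : X, ℝ) z := by
    intro i x z
    simp only [htdef]
    by_cases hz : z = selC E (U i) (Q i) x
    · rw [hz, lp.single_apply_self]
      positivity
    · rw [lp.single_apply_ne _ _ _ hz]
  have hbapp : ∀ x z : X, (b x : ∀ _ : X, ℝ) z = ∑ i ∈ Finset.range k,
      (t i x : ∀ _ : X, ℝ) z := by
    intro x z
    simp only [hbdef, lp.coeFn_sum, Finset.sum_apply]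
  have hblow : ∀ x : X, (n : ℝ) ^ k ≤ ‖b x‖ := by
    intro x
    obtain ⟨i0, hi0, A, hA, hxA⟩ := hcov x
    have hphi : phiC E (U i0) (Q i0) x = Q i0 := phiC_eq_of_mem hErefl hA hxA
    have hterm : (t i0 x : ∀ _ : X, ℝ) (selC E (U i0) (Q i0) x)
        = (n : ℝ) ^ (k - 1 - i0) * (Q i0 : ℝ) := by
      simp only [htdef]
      rw [lp.single_apply_self, hphi]
    have hpow : (n : ℝ) ^ (k - 1 - i0) * (Q i0 : ℝ) = (n : ℝ) ^ k := by
      simp only [hQ]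
      push_cast
      rw [← pow_add]
      congr 1
      omega
    have hsum : (n : ℝ) ^ k ≤ (b x : ∀ _ : X, ℝ) (selC E (U i0) (Q i0) x) := by
      rw [hbapp]
      calc (n : ℝ) ^ k = (t i0 x : ∀ _ : X, ℝ) (selC E (U i0) (Q i0) x) := by
            rw [hterm, hpow]
        _ ≤ ∑ i ∈ Finset.range k, (t i x : ∀ _ : X, ℝ) (selC E (U i0) (Q i0) x) :=
            Finset.single_le_sum (fun i _ => htnn i x _) (Finset.mem_range.mpr hi0)
    calc (n : ℝ) ^ k ≤ (b x : ∀ _ : X, ℝ) (selC E (U i0) (Q i0) x) := hsum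
      _ ≤ |(b x : ∀ _ : X, ℝ) (selC E (U i0) (Q i0) x)| := le_abs_self _
      _ = ‖(b x : ∀ _ : X, ℝ) (selC E (U i0) (Q i0) x)‖ := (Real.norm_eq_abs _).symm
      _ ≤ ‖b x‖ := lp.norm_apply_le_norm one_ne_zero (b x) _
  have hnkpos : (0 : ℝ) < (n : ℝ) ^ k := by positivity
  have hbpos : ∀ x : X, 0 < ‖b x‖ := fun x => lt_of_lt_of_le hnkpos (hblow x)
  refine ⟨fun x => ‖b x‖⁻¹ • b x, ?_, ?_, ?_⟩
  · intro x
    rw [norm_smul, Real.norm_eq_abs, abs_of_pos (inv_pos.mpr (hbpos x)),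
      inv_mul_cancel₀ (hbpos x).ne']
  · intro x y hxy
    have hterm : ∀ i ∈ Finset.range k, ‖t i x - t i y‖ ≤ (n : ℝ) ^ (k - 1 - i) := by
      intro i hik
      rw [Finset.mem_range] at hik
      have hlip1 : phiC E (U i) (Q i) x ≤ phiC E (U i) (Q i) y + 1 :=
        phiC_lip hErefl hEsymm hxy
      have hlip2 : phiC E (U i) (Q i) y ≤ phiC E (U i) (Q i) x + 1 :=
        phiC_lip hErefl hEsymm (hEsymm _ hxy)
      have hwnn : (0 : ℝ) ≤ (n : ℝ) ^ (k - 1 - i) := by positivity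
      by_cases hx0 : phiC E (U i) (Q i) x = 0
      · have htx : ‖t i x‖ = 0 := by
          simp only [htdef]
          rw [lp_norm_single, hx0]
          simp
        have hty : ‖t i y‖ ≤ (n : ℝ) ^ (k - 1 - i) := by
          simp only [htdef]
          rw [lp_norm_single]
          have hy1 : phiC E (U i) (Q i) y ≤ 1 := by omega
          have hy1' : (phiC E (U i) (Q i) y : ℝ) ≤ 1 := by exact_mod_cast hy1
          rw [abs_of_nonneg (by positivity)]
          calc (n : ℝ) ^ (k - 1 - i) * (phiC E (U i) (Q i) y : ℝ)
              ≤ (n : ℝ) ^ (k - 1 - i) * 1 := by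
                exact mul_le_mul_of_nonneg_left hy1' hwnn
            _ = (n : ℝ) ^ (k - 1 - i) := mul_one _
        calc ‖t i x - t i y‖ ≤ ‖t i x‖ + ‖t i y‖ := norm_sub_le _ _
          _ ≤ 0 + (n : ℝ) ^ (k - 1 - i) := by rw [htx]; exact add_le_add_right hty _
          _ = (n : ℝ) ^ (k - 1 - i) := zero_add _
      · by_cases hy0 : phiC E (U i) (Q i) y = 0
        · have hty : ‖t i y‖ = 0 := by
            simp only [htdef]
            rw [lp_norm_single, hy0]
            simp
          have htx : ‖t i x‖ ≤ (n : ℝ) ^ (k - 1 - i) := by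
            simp only [htdef]
            rw [lp_norm_single]
            have hx1 : phiC E (U i) (Q i) x ≤ 1 := by omega
            have hx1' : (phiC E (U i) (Q i) x : ℝ) ≤ 1 := by exact_mod_cast hx1
            rw [abs_of_nonneg (by positivity)]
            calc (n : ℝ) ^ (k - 1 - i) * (phiC E (U i) (Q i) x : ℝ)
                ≤ (n : ℝ) ^ (k - 1 - i) * 1 := by
                  exact mul_le_mul_of_nonneg_left hx1' hwnn
              _ = (n : ℝ) ^ (k - 1 - i) := mul_one _
          calc ‖t i x - t i y‖ ≤ ‖t i x‖ + ‖t i y‖ := norm_sub_le _ _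
            _ ≤ (n : ℝ) ^ (k - 1 - i) + 0 := by rw [hty]; exact add_le_add_left htx _
            _ = (n : ℝ) ^ (k - 1 - i) := add_zero _
        · have hnx : nearAt E (U i) (Q i) x := near_of_phiC_pos (Nat.pos_of_ne_zero hx0)
          have hny : nearAt E (U i) (Q i) y := near_of_phiC_pos (Nat.pos_of_ne_zero hy0)
          have hsel : selC E (U i) (Q i) x = selC E (U i) (Q i) y := hseleq i hik x y hxy hnx hny
          have habs : |(phiC E (U i) (Q i) x : ℝ) - (phiC E (U i) (Q i) y : ℝ)| ≤ 1 := by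
            have c1 : (phiC E (U i) (Q i) x : ℝ) ≤ (phiC E (U i) (Q i) y : ℝ) + 1 := by
              exact_mod_cast hlip1
            have c2 : (phiC E (U i) (Q i) y : ℝ) ≤ (phiC E (U i) (Q i) x : ℝ) + 1 := by
              exact_mod_cast hlip2
            rw [abs_le]
            constructor <;> linarith
          simp only [htdef]
          rw [← hsel, lp_single_sub, lp_norm_single, ← mul_sub, abs_mul,
            abs_of_nonneg hwnn]
          calc (n : ℝ) ^ (k - 1 - i) * |(phiC E (U i) (Q i) x : ℝ) - (phiC E (U i) (Q i) y : ℝ)|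
              ≤ (n : ℝ) ^ (k - 1 - i) * 1 := mul_le_mul_of_nonneg_left habs hwnn
            _ = (n : ℝ) ^ (k - 1 - i) := mul_one _
    have hdiffbound : ‖b x - b y‖ ≤ (n : ℝ) ^ k / ((n : ℝ) - 1) := by
      have hsub : b x - b y = ∑ i ∈ Finset.range k, (t i x - t i y) := by
        simp only [hbdef]
        rw [Finset.sum_sub_distrib]
      rw [hsub]
      calc ‖∑ i ∈ Finset.range k, (t i x - t i y)‖
          ≤ ∑ i ∈ Finset.range k, ‖t i x - t i y‖ := norm_sum_le _ _
        _ ≤ ∑ i ∈ Finset.range k, (n : ℝ) ^ (k - 1 - i) := Finset.sum_le_sum hterm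
        _ = ∑ i ∈ Finset.range k, (n : ℝ) ^ i := Finset.sum_range_reflect (fun i => (n : ℝ) ^ i) k
        _ = ((n : ℝ) ^ k - 1) / ((n : ℝ) - 1) := geom_sum_eq hne1 k
        _ ≤ (n : ℝ) ^ k / ((n : ℝ) - 1) := by
            gcongr
            linarith
    calc ‖‖b x‖⁻¹ • b x - ‖b y‖⁻¹ • b y‖
        ≤ 2 * ‖b x - b y‖ / ‖b x‖ := norm_normalize_sub _ _ (hbpos x) (hbpos y)
      _ ≤ 2 * ((n : ℝ) ^ k / ((n : ℝ) - 1)) / (n : ℝ) ^ k := by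
          apply div_le_div₀ (by positivity) ?_ hnkpos (hblow x)
          linarith [hdiffbound]
      _ = 2 / ((n : ℝ) - 1) := by
          field_simp
      _ < ε := hkey
  · refine ⟨⋃ i ∈ Finset.range k, rcomp (famDiag (U i)) (rpow E (Q i)), ?_, ?_⟩
    · exact ent_biUnion C k _ fun i hi => C.comp_mem (hbdd i hi) (rpow_isEnt C hEent _)
    · intro x y hay
      have hby : (b x : ∀ _ : X, ℝ) y ≠ 0 := by
        intro h0
        apply hay
        rw [lp.coeFn_smul, Pi.smul_apply, h0, smul_zero]
      rw [hbapp] at hby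
      obtain ⟨i, hik, hti⟩ : ∃ i ∈ Finset.range k, (t i x : ∀ _ : X, ℝ) y ≠ 0 := by
        by_contra hc
        push_neg at hc
        exact hby (Finset.sum_eq_zero hc)
      simp only [htdef] at hti
      have hysel : y = selC E (U i) (Q i) x := by
        by_contra hne
        exact hti (lp.single_apply_ne _ _ _ hne)
      have hphi : phiC E (U i) (Q i) x ≠ 0 := by
        intro h0
        apply hti
        rw [hysel, lp.single_apply_self, h0]
        simp
      have hnear : nearAt E (U i) (Q i) x := near_of_phiC_pos (Nat.pos_of_ne_zero hphi)
      obtain ⟨hWU, a, haW, hxa⟩ := WsetC_spec hnear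
      have hyW : y ∈ WsetC E (U i) (Q i) x := by rw [hysel]; exact selC_mem hnear
      refine Set.mem_iUnion₂.mpr ⟨i, hik, ⟨a, ?_, rpow_symm hEsymm _ hxa⟩⟩
      exact Set.mem_biUnion hWU (Set.mk_mem_prod hyW haW)
end
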